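/- Let G be a 2-connected graph and let x be a vertex of G. Then there exist two distinct neighbors s1 and s2 of x such that for each i ∈ {1,2}, the graph G − {x, s_i} (obtained by deleting the vertices x and s_i and all incident edges) is connected. -/

import Mathlib

open SimpleGraph

/-- `P` is a `Λ`-factor of the graph `G`: a collection of ordered triples, each of
which is a 3-vertex path of `G` (the first and third entries being the endpoints),
such that every vertex of `G` lies in exactly one triple. -/
def IsLambdaFactor {V : Type*} (G : SimpleGraph V) (P : Set (V × V × V)) : Prop :=
  (∀ p ∈ P, G.Adj p.1 p.2.1 ∧ G.Adj p.2.1 p.2.2 ∧ p.1 ≠ p.2.2) ∧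
  ∀ v : V, ∃! p : V × V × V, p ∈ P ∧ (v = p.1 ∨ v = p.2.1 ∨ v = p.2.2)

/-- `G` has a `Λ`-factor: a spanning collection of pairwise disjoint 3-vertex paths. -/
def HasLambdaFactor {V : Type*} (G : SimpleGraph V) : Prop :=
  ∃ P, IsLambdaFactor G P

/-- `G` is claw-free: it has no induced subgraph isomorphic to `K_{1,3}`. -/
def ClawFree {V : Type*} (G : SimpleGraph V) : Prop :=
  ∀ x a b c : V, G.Adj x a → G.Adj x b → G.Adj x c →
    a ≠ b → a ≠ c → b ≠ c →
    ¬ G.Adj a b → ¬ G.Adj a c → ¬ G.Adj b c → False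

/-- `G` is `k`-connected: it has more than `k` vertices and removing any fewer than
`k` vertices leaves it connected. -/
def KConnected {V : Type*} (k : ℕ) (G : SimpleGraph V) : Prop :=
  k < Nat.card V ∧ ∀ S : Set V, S.ncard < k → (G.induce Sᶜ).Connected

/-- `G` is cubic: every vertex has degree 3. -/
def CubicGraph {V : Type*} (G : SimpleGraph V) : Prop :=
  ∀ v : V, (G.neighborSet v).ncard = 3

/-- The graph `F^Δ` obtained from `F` by replacing every vertex by a triangle.
Its vertices are the darts of `F`; two darts are adjacent iff they have the same
tail (the triangle edges) or are reverses of each other (the original edges). -/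
def TriangleReplacement {V : Type*} (F : SimpleGraph V) : SimpleGraph F.Dart where
  Adj d d' := d ≠ d' ∧ (d.toProd.1 = d'.toProd.1 ∨ d' = d.symm)
  symm := by
    constructor
    rintro d d' ⟨hne, h | h⟩
    · exact ⟨hne.symm, Or.inl h.symm⟩
    · subst h
      exact ⟨hne.symm, Or.inr (SimpleGraph.Dart.symm_symm d).symm⟩
  loopless := ⟨fun d h => h.1 rfl⟩

section Aux18
variable {V : Type*} [Fintype V] {G : SimpleGraph V}
set_option linter.unusedSectionVars false

def RWk (G : SimpleGraph V) (A : Set V) (u v : V) : Prop :=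
  ∃ w : G.Walk u v, ∀ z ∈ w.support, z ∈ A

lemma rwk_refl {A : Set V} {u : V} (h : u ∈ A) : RWk G A u u :=
  ⟨.nil, by simp [h]⟩

lemma rwk_symm {A : Set V} {u v : V} (h : RWk G A u v) : RWk G A v u := by
  obtain ⟨w, hw⟩ := h
  exact ⟨w.reverse, by intro z hz; rw [Walk.support_reverse] at hz; exact hw z (List.mem_reverse.1 hz)⟩

lemma rwk_trans {A : Set V} {u v w : V} (h : RWk G A u v) (h' : RWk G A v w) : RWk G A u w := by
  obtain ⟨p, hp⟩ := h; obtain ⟨q, hq⟩ := h'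
  refine ⟨p.append q, fun z hz => ?_⟩
  rcases (Walk.mem_support_append_iff p q).1 hz with h | h
  · exact hp z h
  · exact hq z h

lemma rwk_left_mem {A : Set V} {u v : V} (h : RWk G A u v) : u ∈ A := by
  obtain ⟨w, hw⟩ := h; exact hw u w.start_mem_support

lemma rwk_right_mem {A : Set V} {u v : V} (h : RWk G A u v) : v ∈ A :=
  rwk_left_mem (rwk_symm h)

lemma rwk_of_mem_support {A : Set V} {u v : V} (w : G.Walk u v)
    (hw : ∀ z ∈ w.support, z ∈ A) {z : V} (hz : z ∈ w.support) : RWk G A u z := by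
  classical
  exact ⟨w.takeUntil z hz, fun y hy => hw y (Walk.support_takeUntil_subset w hz hy)⟩

lemma rwk_adj {A : Set V} {u v : V} (h : G.Adj u v) (hu : u ∈ A) (hv : v ∈ A) : RWk G A u v :=
  ⟨Walk.cons h .nil, by simp [hu, hv]⟩

lemma conn_iff_rwk (A : Set V) :
    (G.induce A).Connected ↔ A.Nonempty ∧ ∀ u ∈ A, ∀ v ∈ A, RWk G A u v := by
  constructor
  · intro hc
    obtain ⟨a⟩ := hc.nonempty
    refine ⟨⟨a, a.2⟩, fun u hu v hv => ?_⟩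
    obtain ⟨w⟩ := hc.preconnected ⟨u, hu⟩ ⟨v, hv⟩
    refine ⟨w.map (Embedding.induce A).toHom, fun z hz => ?_⟩
    erw [Walk.support_map] at hz
    obtain ⟨y, _, rfl⟩ := List.mem_map.1 hz
    exact y.2
  · rintro ⟨⟨a, ha⟩, h⟩
    have key : ∀ (u v : V) (w : G.Walk u v), (∀ z ∈ w.support, z ∈ A) →
        ∀ (hu : u ∈ A) (hv : v ∈ A), (G.induce A).Reachable ⟨u, hu⟩ ⟨v, hv⟩ := by
      intro u v w
      induction w with
      | nil => intro _ hu hv; rfl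
      | cons hadj p ih =>
        rename_i a b c
        intro hs hu hv
        have hb : b ∈ A := hs b (by simp)
        have h1 : (G.induce A).Adj ⟨a, hu⟩ ⟨b, hb⟩ := hadj
        exact (h1.reachable).trans (ih (fun z hz => hs z (by simp [hz])) hb hv)
    haveI : Nonempty A := ⟨⟨a, ha⟩⟩
    refine SimpleGraph.Connected.mk fun u v => ?_
    obtain ⟨w, hw⟩ := h u u.2 v v.2
    have := key u v w hw u.2 v.2
    simpa using this

lemma mem_pair_compl {x s z : V} : z ∈ ({x, s}ᶜ : Set V) ↔ z ≠ x ∧ z ≠ s := by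
  simp [not_or]

lemma pair_compl_nonempty (h2 : 2 < Nat.card V) (x s : V) :
    ({x, s}ᶜ : Set V).Nonempty := by
  by_contra h
  rw [Set.not_nonempty_iff_eq_empty, Set.compl_empty_iff] at h
  have : ({x, s} : Set V).ncard ≤ 2 := by
    refine le_trans (Set.ncard_insert_le x {s}) ?_
    simp [Set.ncard_singleton]
  rw [h, Set.ncard_univ] at this
  omega

/-- Every component of `G - x - s` contains a neighbor of `x` reachable inside it. -/
lemma helper1 {x s : V} : ∀ {u y : V} (w : G.Walk u y), y = x →
    (∀ z ∈ w.support, z ≠ s) → u ≠ x →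
    ∃ t, G.Adj x t ∧ RWk G ({x, s}ᶜ : Set V) u t := by
  intro u y w
  induction w with
  | nil => intro hy _ ha; exact absurd hy ha
  | @cons a b c hadj p ih =>
    intro hy hs ha
    obtain rfl := hy.symm
    have has : a ≠ s := hs a (by simp)
    by_cases hb : b = x
    · subst hb; exact ⟨a, hadj.symm, rwk_refl (mem_pair_compl.2 ⟨ha, has⟩)⟩
    · have hbs : b ≠ s := hs b (by simp)
      obtain ⟨t, ht, hrw⟩ := ih rfl (fun z hz => hs z (by simp [hz])) hb
      exact ⟨t, ht, rwk_trans
        (rwk_adj hadj (mem_pair_compl.2 ⟨ha, has⟩) (mem_pair_compl.2 ⟨hb, hbs⟩)) hrw⟩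

/-- First-exit lemma: a walk from `v` to `t` avoiding `x` yields a neighbor of `t`
in `v`'s component of `G - x - t`. -/
lemma helper2 {x t v₀ : V} : ∀ {v y : V} (w : G.Walk v y), y = t →
    (∀ z ∈ w.support, z ≠ x) →
    v ∈ ({x, t}ᶜ : Set V) → RWk G ({x, t}ᶜ : Set V) v₀ v →
    ∃ z₀, G.Adj z₀ t ∧ RWk G ({x, t}ᶜ : Set V) v₀ z₀ := by
  intro v y w
  induction w with
  | nil => intro hy _ hv _; exact absurd hy (mem_pair_compl.1 hv).2
  | @cons a b c hadj p ih =>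
    intro hy hs hv hrw
    obtain rfl := hy.symm
    by_cases hb : b = t
    · subst hb; exact ⟨a, hadj, hrw⟩
    · have hbx : b ≠ x := hs b (by simp)
      exact ih rfl (fun z hz => hs z (by simp [hz])) (mem_pair_compl.2 ⟨hbx, hb⟩)
        (rwk_trans hrw (rwk_adj hadj hv (mem_pair_compl.2 ⟨hbx, hb⟩)))

lemma main_lemma (hconn : KConnected 2 G) (x : V) :
    ∀ (n : ℕ) (s u : V), G.Adj x s → u ∈ ({x, s}ᶜ : Set V) →
      ({v | RWk G ({x, s}ᶜ : Set V) u v}).ncard ≤ n →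
      ∃ t, G.Adj x t ∧ RWk G ({x, s}ᶜ : Set V) u t ∧
        (G.induce ({x, t}ᶜ : Set V)).Connected := by
  intro n
  induction n using Nat.strong_induction_on with
  | _ n ih =>
  intro s u hxs hu hn
  -- a neighbor t of x in u's component of G - x - s
  obtain ⟨t, hxt, hut⟩ : ∃ t, G.Adj x t ∧ RWk G ({x, s}ᶜ : Set V) u t := by
    have hc1 : (G.induce ({s}ᶜ : Set V)).Connected := by
      refine hconn.2 {s} ?_
      simp [Set.ncard_singleton]
    rw [conn_iff_rwk] at hc1
    have hus : u ∈ ({s}ᶜ : Set V) := (mem_pair_compl.1 hu).2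
    have hxs' : x ∈ ({s}ᶜ : Set V) := hxs.ne
    obtain ⟨w, hw⟩ := hc1.2 u hus x hxs'
    exact helper1 w rfl (fun z hz => hw z hz) (mem_pair_compl.1 hu).1
  have htmem : t ∈ ({x, s}ᶜ : Set V) := rwk_right_mem hut
  by_cases hc : (G.induce ({x, t}ᶜ : Set V)).Connected
  · exact ⟨t, hxt, hut, hc⟩
  -- otherwise G - x - t is disconnected; find a component avoiding s, and recurse
  have hAne : ({x, t}ᶜ : Set V).Nonempty := pair_compl_nonempty hconn.1 x t
  rw [conn_iff_rwk] at hc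
  push_neg at hc
  obtain ⟨v₁, hv₁, v₂, hv₂, hnr⟩ := hc hAne
  have hsmem : s ∈ ({x, t}ᶜ : Set V) :=
    mem_pair_compl.2 ⟨hxs.ne', fun h => (mem_pair_compl.1 htmem).2 h.symm⟩
  -- a component of G - x - t not containing s
  obtain ⟨v, hv, hnsv⟩ : ∃ v ∈ ({x, t}ᶜ : Set V), ¬ RWk G ({x, t}ᶜ : Set V) v s := by
    by_cases h1 : RWk G ({x, t}ᶜ : Set V) v₁ s
    · exact ⟨v₂, hv₂, fun h2 => hnr (rwk_trans h1 (rwk_symm h2))⟩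
    · exact ⟨v₁, hv₁, h1⟩
  -- walks inside that component avoid s, hence live in {x, s}ᶜ as well
  have hAt_to_As : ∀ z, RWk G ({x, t}ᶜ : Set V) v z → RWk G ({x, s}ᶜ : Set V) v z := by
    rintro z ⟨w, hw⟩
    refine ⟨w, fun y hy => ?_⟩
    have hyt : RWk G ({x, t}ᶜ : Set V) v y := rwk_of_mem_support w hw hy
    have hys : y ≠ s := fun h => hnsv (h ▸ hyt)
    exact mem_pair_compl.2 ⟨(mem_pair_compl.1 (hw y hy)).1, hys⟩
  -- a neighbor z₀ of t in the component of v (using connectivity of G - x)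
  obtain ⟨z₀, hz₀t, hvz₀⟩ : ∃ z₀, G.Adj z₀ t ∧ RWk G ({x, t}ᶜ : Set V) v z₀ := by
    have hcx : (G.induce ({x}ᶜ : Set V)).Connected := by
      refine hconn.2 {x} ?_
      simp [Set.ncard_singleton]
    rw [conn_iff_rwk] at hcx
    have hvx : v ∈ ({x}ᶜ : Set V) := (mem_pair_compl.1 hv).1
    have htx : t ∈ ({x}ᶜ : Set V) := hxt.ne'
    obtain ⟨w, hw⟩ := hcx.2 v hvx t htx
    exact helper2 w rfl (fun z hz => hw z hz) hv (rwk_refl hv)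
  -- the component of v in G - x - t is strictly contained in that of u in G - x - s
  have hz₀s : z₀ ∈ ({x, s}ᶜ : Set V) := rwk_right_mem (hAt_to_As z₀ hvz₀)
  have Csub : {z | RWk G ({x, t}ᶜ : Set V) v z} ⊆ {z | RWk G ({x, s}ᶜ : Set V) u z} := by
    intro z hz
    have h1 : RWk G ({x, s}ᶜ : Set V) u z₀ :=
      rwk_trans hut (rwk_adj hz₀t.symm htmem hz₀s)
    exact rwk_trans h1 (rwk_trans (rwk_symm (hAt_to_As z₀ hvz₀)) (hAt_to_As z hz))
  have htin : t ∈ {z | RWk G ({x, s}ᶜ : Set V) u z} := hut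
  have htout : t ∉ {z | RWk G ({x, t}ᶜ : Set V) v z} := by
    intro h
    exact (mem_pair_compl.1 (rwk_right_mem h)).2 rfl
  have hss : {z | RWk G ({x, t}ᶜ : Set V) v z} ⊂ {z | RWk G ({x, s}ᶜ : Set V) u z} :=
    HasSubset.Subset.ssubset_of_ne Csub (fun h => htout (h ▸ htin))
  have hlt : ({z | RWk G ({x, t}ᶜ : Set V) v z}).ncard <
      ({z | RWk G ({x, s}ᶜ : Set V) u z}).ncard :=
    Set.ncard_lt_ncard hss (Set.toFinite _)
  obtain ⟨t', hxt', hvt', hct'⟩ :=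
    ih _ (lt_of_lt_of_le hlt hn) t v hxt hv le_rfl
  exact ⟨t', hxt', Csub hvt', hct'⟩

end Aux18

/-- if `G` is a 2-connected graph and `x` a vertex, then `x` has two
distinct neighbors `s₁, s₂` such that each `G − {x, sᵢ}` is connected. -/
theorem stmt_18 {V : Type*} [Fintype V] (G : SimpleGraph V)
    (hconn : KConnected 2 G) (x : V) :
    ∃ s₁ s₂ : V, s₁ ≠ s₂ ∧ G.Adj x s₁ ∧ G.Adj x s₂ ∧
      (G.induce ({x, s₁}ᶜ : Set V)).Connected ∧
      (G.induce ({x, s₂}ᶜ : Set V)).Connected := by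
  classical
  -- x has a neighbor
  obtain ⟨s₀, hxs₀⟩ : ∃ s, G.Adj x s := by
    have hcu : (G.induce ((∅ : Set V)ᶜ)).Connected := hconn.2 ∅ (by simp)
    rw [conn_iff_rwk] at hcu
    have h3 : 1 < Fintype.card V := by
      have := hconn.1; rw [Nat.card_eq_fintype_card] at this; omega
    obtain ⟨y, hy⟩ := Fintype.exists_ne_of_one_lt_card h3 x
    obtain ⟨w, -⟩ := hcu.2 x (by simp) y (by simp)
    cases w with
    | nil => exact absurd rfl hy.symm
    | cons h p => exact ⟨_, h⟩
  obtain ⟨u₀, hu₀⟩ := pair_compl_nonempty hconn.1 x s₀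
  obtain ⟨t₀, hxt₀, hrw₀, hct₀⟩ := main_lemma hconn x _ s₀ u₀ hxs₀ hu₀ le_rfl
  by_cases hcs : (G.induce ({x, s₀}ᶜ : Set V)).Connected
  · refine ⟨s₀, t₀, ?_, hxs₀, hxt₀, hcs, hct₀⟩
    have := (mem_pair_compl.1 (rwk_right_mem hrw₀)).2
    exact fun h => this h.symm
  · rw [conn_iff_rwk] at hcs
    push_neg at hcs
    obtain ⟨v₁, hv₁, v₂, hv₂, hnr⟩ := hcs (pair_compl_nonempty hconn.1 x s₀)
    obtain ⟨t₁, hxt₁, hrw₁, hct₁⟩ := main_lemma hconn x _ s₀ v₁ hxs₀ hv₁ le_rfl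
    obtain ⟨t₂, hxt₂, hrw₂, hct₂⟩ := main_lemma hconn x _ s₀ v₂ hxs₀ hv₂ le_rfl
    refine ⟨t₁, t₂, ?_, hxt₁, hxt₂, hct₁, hct₂⟩
    intro h
    exact hnr (rwk_trans hrw₁ (h ▸ rwk_symm hrw₂))
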